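/- Let t, ρ : ℝ → ℝ be twice differentiable functions of τ satisfying the pulsating-string equations t''·cosh²ρ + 2 t' ρ' sinh ρ cosh ρ = 0 and ρ'² − t'²cosh²ρ + sinh²ρ = 0. Then (a) the quantity e := t'·cosh²ρ is constant in τ; and (b) the function x := sinh ∘ ρ satisfies x'² = e² − x² − x⁴ for all τ; moreover (c) if in addition ρ'' + sinh ρ cosh ρ·(t'² + 1) = 0 holds, then x satisfies the Duffing equation x'' = −x − 2x³. -/

import Mathlib

noncomputable section

open Real

/-- For the pulsating string: (a) e := t'·cosh²ρ is a constant of motion;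
(b) x := sinh ∘ ρ satisfies the first integral x'² = e² − x² − x⁴; and (c) given also the
ρ-equation of motion, x satisfies the Duffing equation x'' = −x − 2x³. -/
theorem pulsating_string_first_integral (t ρ : ℝ → ℝ)
    (ht1 : Differentiable ℝ t) (ht2 : Differentiable ℝ (deriv t))
    (hρ1 : Differentiable ℝ ρ) (hρ2 : Differentiable ℝ (deriv ρ))
    (hEoMt : ∀ τ, deriv (deriv t) τ * Real.cosh (ρ τ) ^ 2
      + 2 * deriv t τ * deriv ρ τ * Real.sinh (ρ τ) * Real.cosh (ρ τ) = 0)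
    (hVir : ∀ τ, (deriv ρ τ) ^ 2 - (deriv t τ) ^ 2 * Real.cosh (ρ τ) ^ 2
      + Real.sinh (ρ τ) ^ 2 = 0) :
    -- (a) e := t'·cosh²ρ is constant in τ
    (∀ τ₁ τ₂ : ℝ, deriv t τ₁ * Real.cosh (ρ τ₁) ^ 2
      = deriv t τ₂ * Real.cosh (ρ τ₂) ^ 2) ∧
    -- (b) x := sinh ∘ ρ satisfies x'² = e² − x² − x⁴
    (∀ τ : ℝ,
      (deriv (fun τ' => Real.sinh (ρ τ')) τ) ^ 2
        = (deriv t 0 * Real.cosh (ρ 0) ^ 2) ^ 2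
          - Real.sinh (ρ τ) ^ 2 - Real.sinh (ρ τ) ^ 4) ∧
    -- (c) with the ρ-equation of motion, x satisfies the Duffing equation
    ((∀ τ, deriv (deriv ρ) τ
        + Real.sinh (ρ τ) * Real.cosh (ρ τ) * ((deriv t τ) ^ 2 + 1) = 0) →
      ∀ τ : ℝ,
        deriv (deriv (fun τ' => Real.sinh (ρ τ'))) τ
          = -Real.sinh (ρ τ) - 2 * Real.sinh (ρ τ) ^ 3) := by
  -- derivative of sinh ∘ ρ
  have hx : ∀ τ, HasDerivAt (fun τ' => Real.sinh (ρ τ'))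
      (Real.cosh (ρ τ) * deriv ρ τ) τ := fun τ =>
    (Real.hasDerivAt_sinh (ρ τ)).comp τ (hρ1 τ).hasDerivAt
  have hxderiv : deriv (fun τ' => Real.sinh (ρ τ')) = fun τ => Real.cosh (ρ τ) * deriv ρ τ :=
    funext fun τ => (hx τ).deriv
  -- (a)
  have hE : ∀ τ, HasDerivAt (fun τ' => deriv t τ' * Real.cosh (ρ τ') ^ 2)
      (deriv (deriv t) τ * Real.cosh (ρ τ) ^ 2
        + deriv t τ * (2 * Real.cosh (ρ τ) * (Real.sinh (ρ τ) * deriv ρ τ))) τ := by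
    intro τ
    have hc : HasDerivAt (fun τ' => Real.cosh (ρ τ') ^ 2)
        (2 * Real.cosh (ρ τ) * (Real.sinh (ρ τ) * deriv ρ τ)) τ := by
      have := (((Real.hasDerivAt_cosh (ρ τ)).comp τ (hρ1 τ).hasDerivAt).fun_pow 2)
      simpa [mul_comm, mul_assoc, mul_left_comm] using this
    exact (ht2 τ).hasDerivAt.mul hc
  have hE0 : ∀ τ, deriv (fun τ' => deriv t τ' * Real.cosh (ρ τ') ^ 2) τ = 0 := by
    intro τ
    rw [(hE τ).deriv]
    have := hEoMt τ
    nlinarith [this]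
  have hconst : ∀ τ₁ τ₂ : ℝ, deriv t τ₁ * Real.cosh (ρ τ₁) ^ 2
      = deriv t τ₂ * Real.cosh (ρ τ₂) ^ 2 := by
    intro τ₁ τ₂
    have : (fun τ' => deriv t τ' * Real.cosh (ρ τ') ^ 2) τ₁
        = (fun τ' => deriv t τ' * Real.cosh (ρ τ') ^ 2) τ₂ :=
      is_const_of_deriv_eq_zero
        (ht2.mul ((Real.differentiable_cosh.comp hρ1).pow 2)) hE0 τ₁ τ₂
    simpa using this
  refine ⟨hconst, ?_, ?_⟩
  · intro τ
    have he := hconst τ 0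
    have hv := hVir τ
    rw [hxderiv]
    have hch : Real.cosh (ρ τ) ^ 2 = 1 + Real.sinh (ρ τ) ^ 2 := by
      have := Real.cosh_sq_sub_sinh_sq (ρ τ); nlinarith
    simp only
    linear_combination Real.cosh (ρ τ) ^ 2 * hv
      + (deriv t τ * Real.cosh (ρ τ) ^ 2 + deriv t 0 * Real.cosh (ρ 0) ^ 2) * he
      - Real.sinh (ρ τ) ^ 2 * hch
  · intro hEoMρ τ
    have h2 : HasDerivAt (fun τ' => Real.cosh (ρ τ') * deriv ρ τ')
        (Real.sinh (ρ τ) * deriv ρ τ * deriv ρ τ + Real.cosh (ρ τ) * deriv (deriv ρ) τ) τ :=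
      ((Real.hasDerivAt_cosh (ρ τ)).comp τ (hρ1 τ).hasDerivAt).mul (hρ2 τ).hasDerivAt
    rw [hxderiv, h2.deriv]
    have hv := hVir τ
    have hr := hEoMρ τ
    have hch : Real.cosh (ρ τ) ^ 2 = 1 + Real.sinh (ρ τ) ^ 2 := by
      have := Real.cosh_sq_sub_sinh_sq (ρ τ); nlinarith
    linear_combination Real.sinh (ρ τ) * hv + Real.cosh (ρ τ) * hr - Real.sinh (ρ τ) * hch
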